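/- In a lattice effect algebra E, every central element z is compatible with every element x of E, i.e., x ∨ z = x ⊕ (z ⊖ (x ∧ z)). -/

import Mathlib

structure EffectAlgebra (α : Type*) where
  oplus : α → α → Option α
  zero : α
  one : α
  zero_ne_one : zero ≠ one
  comm : ∀ x y, oplus x y = oplus y x
  assoc : ∀ x y z, (oplus x y).bind (fun w => oplus w z) = (oplus y z).bind (fun w => oplus x w)
  compl : α → α
  oplus_compl : ∀ x, oplus x (compl x) = some one
  compl_unique : ∀ x y, oplus x y = some one → y = compl x
  one_max : ∀ x, (oplus one x).isSome → x = zero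

/-- The order induced by the partial operation: `x ≤ y` iff `∃ z, x ⊕ z = y`. -/
def EffectAlgebra.le {α : Type*} (E : EffectAlgebra α) (x y : α) : Prop :=
  ∃ z, E.oplus x z = some y

/-- A lattice effect algebra: the lattice order coincides with the induced effect-algebra order. -/
structure LatticeEffectAlgebra (α : Type*) [Lattice α] extends EffectAlgebra α where
  le_iff : ∀ x y : α, x ≤ y ↔ ∃ z, oplus x z = some y

variable {α : Type*}

/-- A sharp element: `w ∧ w' = 0`. -/
def EffectAlgebra.Sharp [Lattice α] (E : EffectAlgebra α) (w : α) : Prop :=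
  w ⊓ E.compl w = E.zero

/-- A central element: `x = (x ∧ z) ∨ (x ∧ z')` for all `x`. -/
def EffectAlgebra.Central [Lattice α] (E : EffectAlgebra α) (z : α) : Prop :=
  ∀ x, x = (x ⊓ z) ⊔ (x ⊓ E.compl z)

/-- Compatibility: `x ↔ y` iff `x ∨ y = x ⊕ (y ⊖ (x ∧ y))`, expressed via the
(unique) difference `d = y ⊖ (x ∧ y)`, i.e. `(x ∧ y) ⊕ d = y` and `x ⊕ d = x ∨ y`. -/
def EffectAlgebra.Compatible [Lattice α] (E : EffectAlgebra α) (x y : α) : Prop :=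
  ∃ d, E.oplus (x ⊓ y) d = some y ∧ E.oplus x d = some (x ⊔ y)

section Aux
variable [Lattice α] (E : LatticeEffectAlgebra α)

lemma ea_assoc3 {a b s : α} (h : E.oplus a b = some s) (c : α) :
    E.oplus s c = (E.oplus b c).bind (fun w => E.oplus a w) := by
  have h2 := E.assoc a b c
  rw [h] at h2
  simpa using h2

lemma ea_cancel {a b c s : α} (hb : E.oplus a b = some s) (hc : E.oplus a c = some s) :
    b = c := by
  have key : ∀ y : α, E.oplus a y = some s → E.oplus (E.compl s) a = some (E.compl y) := by
    intro y hy
    have h1 := ea_assoc3 E hy (E.compl s)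
    rw [E.oplus_compl s] at h1
    obtain ⟨u, hu1, hu2⟩ := Option.bind_eq_some_iff.1 h1.symm
    have hu : u = E.compl a := E.compl_unique a u hu2
    rw [hu] at hu1
    -- hu1 : E.oplus y (E.compl s) = some (E.compl a)
    have h2 := ea_assoc3 E hu1 a
    have h3 : E.oplus (E.compl a) a = some E.one := by rw [E.comm]; exact E.oplus_compl a
    rw [h3] at h2
    obtain ⟨v, hv1, hv2⟩ := Option.bind_eq_some_iff.1 h2.symm
    have : v = E.compl y := E.compl_unique y v hv2
    rw [this] at hv1
    exact hv1
  have h1 := key b hb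
  have h2 := key c hc
  rw [h1] at h2
  have h3 : E.compl b = E.compl c := Option.some.inj h2
  have cc : ∀ y : α, E.compl (E.compl y) = y := by
    intro y
    symm
    apply E.compl_unique
    rw [E.comm]; exact E.oplus_compl y
  calc b = E.compl (E.compl b) := (cc b).symm
    _ = E.compl (E.compl c) := by rw [h3]
    _ = c := cc c

lemma ea_compl_compl (x : α) : E.compl (E.compl x) = x := by
  symm
  apply E.compl_unique
  rw [E.comm]; exact E.oplus_compl x

lemma ea_le_left {a b s : α} (h : E.oplus a b = some s) : a ≤ s :=
  (E.le_iff a s).2 ⟨b, h⟩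

lemma ea_compl_one : E.compl E.one = E.zero := by
  apply E.one_max
  rw [E.oplus_compl]
  rfl

lemma ea_oplus_zero (x : α) : E.oplus x E.zero = some x := by
  have h1 : E.oplus E.one E.zero = some E.one := by
    have h := E.oplus_compl E.one
    rwa [ea_compl_one E] at h
  have key : ∀ y : α, E.oplus (E.compl y) E.zero = some (E.compl y) := by
    intro y
    have h := ea_assoc3 E (E.oplus_compl y) E.zero
    rw [h1] at h
    obtain ⟨u, hu1, hu2⟩ := Option.bind_eq_some_iff.1 h.symm
    have : u = E.compl y := E.compl_unique y u hu2
    rwa [this] at hu1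
  have h := key (E.compl x)
  rwa [ea_compl_compl E] at h

lemma ea_antitone {a b da db s : α} (hab : a ≤ b) (ha : E.oplus a da = some s)
    (hb : E.oplus b db = some s) : db ≤ da := by
  obtain ⟨c, hc⟩ := (E.le_iff a b).1 hab
  have h := ea_assoc3 E hc db
  rw [hb] at h
  obtain ⟨t, ht1, ht2⟩ := Option.bind_eq_some_iff.1 h.symm
  have : t = da := ea_cancel E ht2 ha
  rw [this] at ht1
  exact (E.le_iff db da).2 ⟨c, by rw [E.comm]; exact ht1⟩

lemma ea_sup_inf {a b s : α} (h : E.oplus a b = some s) :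
    E.oplus (a ⊔ b) (a ⊓ b) = some s := by
  have hba : E.oplus b a = some s := by rw [E.comm]; exact h
  have has : a ≤ s := ea_le_left E h
  have hbs : b ≤ s := ea_le_left E hba
  obtain ⟨dj, hdj⟩ := (E.le_iff (a ⊔ b) s).1 (sup_le has hbs)
  have h1 : dj ≤ b := ea_antitone E le_sup_left h hdj
  have h2 : dj ≤ a := ea_antitone E le_sup_right hba hdj
  obtain ⟨u, hu⟩ := (E.le_iff (a ⊓ b) s).1 (le_trans inf_le_left has)
  have hb_u : b ≤ u := ea_antitone E inf_le_left hu h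
  have ha_u : a ≤ u := ea_antitone E inf_le_right hu hba
  have hus : E.oplus u (a ⊓ b) = some s := by rw [E.comm]; exact hu
  have h3 : a ⊓ b ≤ dj := ea_antitone E (sup_le ha_u hb_u) hdj hus
  have : dj = a ⊓ b := le_antisymm (le_inf h2 h1) h3
  rw [← this]
  exact hdj

lemma ea_def_of_le {a c t s : α} (hct : c ≤ t) (h : E.oplus a t = some s) :
    ∃ u, E.oplus a c = some u := by
  obtain ⟨w, hw⟩ := (E.le_iff c t).1 hct
  have ha := E.assoc a c w
  rw [hw] at ha
  simp only [Option.bind_some] at ha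
  rw [h] at ha
  cases hac : E.oplus a c with
  | none => rw [hac] at ha; simp at ha
  | some u => exact ⟨u, rfl⟩

end Aux

/-- every central element `z` is compatible with every element `x`,
i.e. `x ∨ z = x ⊕ (z ⊖ (x ∧ z))`. -/
theorem central_compatible_with_all {α : Type*} [Lattice α]
    (E : LatticeEffectAlgebra α) (z : α) (hz : E.Central z) :
    ∀ x : α, E.Compatible x z := by
  intro x
  have hzz' : E.oplus z (E.compl z) = some E.one := E.oplus_compl z
  have le_one : ∀ a : α, a ≤ E.one := fun a => ea_le_left E (E.oplus_compl a)
  have zero_le : ∀ a : α, E.zero ≤ a := fun a =>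
    (E.le_iff E.zero a).2 ⟨a, by rw [E.comm]; exact ea_oplus_zero E a⟩
  have hsup : z ⊔ E.compl z = E.one := by
    have h1 := hz E.one
    rw [inf_eq_right.mpr (le_one z), inf_eq_right.mpr (le_one (E.compl z))] at h1
    exact h1.symm
  have hsharp : z ⊓ E.compl z = E.zero := by
    have h := ea_sup_inf E hzz'
    rw [hsup] at h
    exact E.one_max _ (by rw [h]; rfl)
  have hx12 : (x ⊓ z) ⊓ (x ⊓ E.compl z) = E.zero := by
    refine le_antisymm ?_ (zero_le _)
    rw [← hsharp]
    exact le_inf (inf_le_left.trans inf_le_right) (inf_le_right.trans inf_le_right)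
  obtain ⟨t2, ht2⟩ := ea_def_of_le E (inf_le_right : x ⊓ E.compl z ≤ E.compl z) hzz'
  have ht2' : E.oplus (x ⊓ E.compl z) z = some t2 := by rw [E.comm]; exact ht2
  obtain ⟨w, hw⟩ := ea_def_of_le E (inf_le_right : x ⊓ z ≤ z) ht2'
  have hw' : E.oplus (x ⊓ z) (x ⊓ E.compl z) = some w := by rw [E.comm]; exact hw
  have hwx : w = x := by
    have h := ea_sup_inf E hw'
    rw [hx12, ← hz x, ea_oplus_zero] at h
    exact (Option.some.inj h).symm
  rw [hwx] at hw
  obtain ⟨d, hd⟩ := (E.le_iff (x ⊓ z) z).1 inf_le_right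
  refine ⟨d, hd, ?_⟩
  have h := ea_assoc3 E hw d
  rw [hd] at h
  simp only [Option.bind_some] at h
  rw [ht2'] at h
  -- h : E.oplus x d = some t2 ; identify t2
  have hj := ea_sup_inf E ht2'
  have hm : (x ⊓ E.compl z) ⊓ z = E.zero := by
    refine le_antisymm ?_ (zero_le _)
    rw [← hsharp]
    exact le_inf inf_le_right (inf_le_left.trans inf_le_right)
  rw [hm, ea_oplus_zero] at hj
  have ht2x : t2 = (x ⊓ E.compl z) ⊔ z := (Option.some.inj hj).symm
  have hsup2 : (x ⊓ E.compl z) ⊔ z = x ⊔ z := by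
    refine le_antisymm (sup_le (inf_le_left.trans le_sup_left) le_sup_right) (sup_le ?_ le_sup_right)
    exact (hz x).le.trans (sup_le (inf_le_right.trans le_sup_right) le_sup_left)
  rw [h, ht2x, hsup2]
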